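/- Let δ > 0 and m, h > 0 be real, and define V₄ : ℕ × ℕ → ℝ by V₄(x₁,x₂) = m·x₂^{δ} + h·(∑_{k=1}^{x₁} 1/(δ + (k choose 5)·5!))·x₂^{δ}. Define the operator T₄ on functions f : ℕ × ℕ → ℝ by T₄f(x₁,x₂) = x₂³·(f(x₁, x₂−1) − f(x₁,x₂)) + (x₁ choose 5)·5!·x₂²·(f(x₁−5, x₂) − f(x₁,x₂)) (the term x₂³ vanishes when x₂ = 0, and (x₁ choose 5) = 0 when x₁ < 5, so the truncated subtractions are harmless). Then there exist C > 0 and N ∈ ℕ such that for all x₁ ∈ ℕ and all x₂ ≥ N, T₄V₄(x₁,x₂) ≤ −C·x₂^{δ+2}. -/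

import Mathlib

open Real


/-- The local Lyapunov function in the priming region `𝕋₄` (case `δ' = 0`,
`δ'' − 2 = δ`): `V₄(x₁,x₂) = m·x₂^δ + h·(∑_{k=1}^{x₁} 1/(δ + (k choose 5)·5!))·x₂^δ`. -/
noncomputable def V4 (m h δ : ℝ) (x₁ x₂ : ℕ) : ℝ :=
  m * (x₂ : ℝ) ^ δ +
    h * (∑ k ∈ Finset.Icc 1 x₁,
      1 / (δ + (k.choose 5 : ℝ) * (Nat.factorial 5 : ℝ))) * (x₂ : ℝ) ^ δ

/-- The dominant part of the generator in the priming region: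
`T₄f(x₁,x₂) = x₂³·(f(x₁,x₂−1) − f(x₁,x₂)) + (x₁ choose 5)·5!·x₂²·(f(x₁−5,x₂) − f(x₁,x₂))`
(truncated natural subtraction; harmless since `x₂³ = 0` at `x₂ = 0` and
`(x₁ choose 5) = 0` for `x₁ < 5`). -/
noncomputable def T4 (f : ℕ → ℕ → ℝ) (x₁ x₂ : ℕ) : ℝ :=
  (x₂ : ℝ) ^ 3 * (f x₁ (x₂ - 1) - f x₁ x₂) +
    (x₁.choose 5 : ℝ) * (Nat.factorial 5 : ℝ) * (x₂ : ℝ) ^ 2 * (f (x₁ - 5) x₂ - f x₁ x₂)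

lemma key_gap (δ : ℝ) (hδ : 0 < δ) (y : ℝ) (hy : 2 ≤ y) :
    δ * min 1 ((2:ℝ) ^ ((1:ℝ) - δ)) * y ^ (δ - 1) ≤ y ^ δ - (y - 1) ^ δ := by
  have hy0 : (0:ℝ) < y := by linarith
  have hy1 : (0:ℝ) ≤ y - 1 := by linarith
  have hyd : (0:ℝ) ≤ y ^ (δ - 1) := rpow_nonneg hy0.le _
  rcases le_total δ 1 with hδ1 | hδ1
  · have hs : (-1:ℝ) ≤ -1/y := by
      rw [neg_div, neg_le_neg_iff]
      rw [div_le_one hy0]; linarith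
    have hb := rpow_one_add_le_one_add_mul_self hs hδ.le hδ1
    have h1 : (1:ℝ) + -1/y = (y-1)/y := by field_simp; ring
    rw [h1] at hb
    have h2 : (y-1) ^ δ ≤ (1 + δ * (-1/y)) * y ^ δ := by
      calc (y-1) ^ δ = ((y-1)/y * y) ^ δ := by rw [div_mul_cancel₀]; exact hy0.ne'
        _ = ((y-1)/y) ^ δ * y ^ δ := mul_rpow (by positivity) hy0.le
        _ ≤ (1 + δ * (-1/y)) * y ^ δ := by
            apply mul_le_mul_of_nonneg_right hb (rpow_nonneg hy0.le _)
    have h3 : y ^ (δ - 1) = y ^ δ / y := by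
      rw [rpow_sub hy0, rpow_one]
    have h4 : (1 + δ * (-1/y)) * y ^ δ = y ^ δ - δ * y ^ (δ - 1) := by
      rw [h3]; field_simp; ring
    rw [h4] at h2
    have hK : min 1 ((2:ℝ) ^ ((1:ℝ) - δ)) ≤ 1 := min_le_left _ _
    nlinarith [mul_le_mul_of_nonneg_right hK hyd, hδ.le]
  · have hy1' : (1:ℝ) ≤ y - 1 := by linarith
    have hy1p : (0:ℝ) < y - 1 := by linarith
    have hs : (-1:ℝ) ≤ 1/(y-1) := by
      have : (0:ℝ) ≤ 1/(y-1) := by positivity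
      linarith
    have hb := one_add_mul_self_le_rpow_one_add hs hδ1
    have h1 : (1:ℝ) + 1/(y-1) = y/(y-1) := by field_simp; ring
    rw [h1] at hb
    have h2 : (1 + δ * (1/(y-1))) * (y-1) ^ δ ≤ y ^ δ := by
      calc (1 + δ * (1/(y-1))) * (y-1) ^ δ ≤ (y/(y-1)) ^ δ * (y-1) ^ δ :=
            mul_le_mul_of_nonneg_right hb (rpow_nonneg hy1 _)
        _ = (y/(y-1) * (y-1)) ^ δ := (mul_rpow (by positivity) hy1).symm
        _ = y ^ δ := by rw [div_mul_cancel₀ _ hy1p.ne']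
    have h3 : (y-1) ^ (δ - 1) = (y-1) ^ δ / (y-1) := by
      rw [rpow_sub hy1p, rpow_one]
    have h4 : (1 + δ * (1/(y-1))) * (y-1) ^ δ = (y-1) ^ δ + δ * (y-1) ^ (δ-1) := by
      rw [h3]; field_simp
    rw [h4] at h2
    have h5 : (y/2) ^ (δ-1) ≤ (y-1) ^ (δ-1) :=
      rpow_le_rpow (by positivity) (by linarith) (by linarith)
    have h6 : (y/2) ^ (δ-1) = y ^ (δ-1) * (2:ℝ) ^ ((1:ℝ)-δ) := by
      rw [div_rpow hy0.le (by norm_num : (0:ℝ) ≤ 2)]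
      rw [show (1:ℝ) - δ = -(δ-1) by ring, rpow_neg (by norm_num : (0:ℝ) ≤ 2)]
      rw [div_eq_mul_inv]
    have hK : min 1 ((2:ℝ) ^ ((1:ℝ) - δ)) ≤ (2:ℝ) ^ ((1:ℝ)-δ) := min_le_right _ _
    nlinarith [mul_le_mul_of_nonneg_right hK hyd, mul_le_mul_of_nonneg_left h5 hδ.le]


/-- Foster–Lyapunov drift condition in the priming region: for `δ > 0` and `m, h > 0`
there exist `C > 0` and `N` such that `T₄V₄(x₁,x₂) ≤ −C·x₂^{δ+2}` for all `x₁` and all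
`x₂ ≥ N`. -/
theorem stmt8 (δ m h : ℝ) (hδ : 0 < δ) (hm : 0 < m) (hh : 0 < h) :
    ∃ C > (0 : ℝ), ∃ N : ℕ, ∀ x₁ x₂ : ℕ, N ≤ x₂ →
      T4 (V4 m h δ) x₁ x₂ ≤ -C * (x₂ : ℝ) ^ (δ + 2) := by
  set K : ℝ := min 1 ((2:ℝ) ^ ((1:ℝ) - δ)) with hKdef
  have hK : 0 < K := lt_min one_pos (rpow_pos_of_pos two_pos _)
  refine ⟨m * δ * K, by positivity, 2, ?_⟩
  intro x₁ x₂ hx₂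
  set S : ℕ → ℝ := fun a => ∑ k ∈ Finset.Icc 1 a,
    1 / (δ + (k.choose 5 : ℝ) * (Nat.factorial 5 : ℝ)) with hSdef
  have hS0 : ∀ a, 0 ≤ S a := fun a =>
    Finset.sum_nonneg fun k _ => by positivity
  have hSmono : S (x₁ - 5) ≤ S x₁ :=
    Finset.sum_le_sum_of_subset_of_nonneg
      (Finset.Icc_subset_Icc_right (Nat.sub_le _ _)) (fun k _ _ => by positivity)
  have hV : ∀ a b : ℕ, V4 m h δ a b = (m + h * S a) * (b : ℝ) ^ δ := by
    intro a b; simp only [V4, hSdef]; ring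
  have hn2 : (2:ℝ) ≤ (x₂ : ℝ) := by exact_mod_cast hx₂
  have hn0 : (0:ℝ) < (x₂ : ℝ) := by linarith
  have hc : ((x₂ - 1 : ℕ) : ℝ) = (x₂ : ℝ) - 1 := by
    have : 1 ≤ x₂ := by omega
    push_cast [this]; ring
  set n : ℝ := (x₂ : ℝ)
  have hg := key_gap δ hδ n hn2
  have hgap0 : 0 ≤ δ * K * n ^ (δ - 1) := by positivity
  -- second term nonpositive
  have hT2 : (x₁.choose 5 : ℝ) * (Nat.factorial 5 : ℝ) * n ^ 2 *
      (V4 m h δ (x₁ - 5) x₂ - V4 m h δ x₁ x₂) ≤ 0 := by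
    rw [hV, hV]
    have hd : (m + h * S (x₁ - 5)) * n ^ δ - (m + h * S x₁) * n ^ δ ≤ 0 := by
      have := rpow_nonneg hn0.le δ
      nlinarith [mul_le_mul_of_nonneg_right hSmono (rpow_nonneg hn0.le δ), hh.le]
    have hnn : (0:ℝ) ≤ (x₁.choose 5 : ℝ) * (Nat.factorial 5 : ℝ) * n ^ 2 := by positivity
    exact mul_nonpos_of_nonneg_of_nonpos hnn hd
  -- first term bound
  have hA : m ≤ m + h * S x₁ := by nlinarith [hS0 x₁, hh.le]
  have h1 : m * (δ * K * n ^ (δ - 1)) ≤ (m + h * S x₁) * (n ^ δ - (n - 1) ^ δ) :=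
    mul_le_mul hA hg hgap0 (by linarith)
  have h2 : n ^ 3 * (m * (δ * K * n ^ (δ - 1))) ≤
      n ^ 3 * ((m + h * S x₁) * (n ^ δ - (n - 1) ^ δ)) :=
    mul_le_mul_of_nonneg_left h1 (by positivity)
  have hpow : n ^ 3 * n ^ (δ - 1) = n ^ (δ + 2) := by
    rw [show (n:ℝ) ^ 3 = n ^ ((3:ℕ):ℝ) from (rpow_natCast n 3).symm,
      ← rpow_add hn0]
    congr 1
    push_cast
    ring
  have h3 : n ^ 3 * (m * (δ * K * n ^ (δ - 1))) = m * δ * K * n ^ (δ + 2) := by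
    rw [← hpow]; ring
  have hT1 : n ^ 3 * (V4 m h δ x₁ (x₂ - 1) - V4 m h δ x₁ x₂) ≤
      -(m * δ * K) * n ^ (δ + 2) := by
    rw [hV, hV, hc]
    have heq : n ^ 3 * ((m + h * S x₁) * (n - 1) ^ δ - (m + h * S x₁) * n ^ δ)
        = -(n ^ 3 * ((m + h * S x₁) * (n ^ δ - (n - 1) ^ δ))) := by ring
    rw [heq]
    linarith [h2, h3.symm.le, h3.le]
  simp only [T4]
  have := add_le_add hT1 hT2
  linarith
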